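/- lim_{Δ→0⁺} of the download cost Mω(ρ_BS + (ρ_D2D hα/F − ρ_BS)·p_D2D(Δ)) equals Mω ρ_D2D hα/F, and lim_{Δ→∞} equals Mω ρ_BS, for μ > 0. -/

import Mathlib

open Real Filter Finset


lemma lagrange_key (h m : ℕ) (hhm : h ≤ m) :
    ∑ i ∈ Finset.Icc h m, ∏ j ∈ (Finset.Icc h m).erase i,
      (j : ℝ) / ((j : ℝ) - (i : ℝ)) = 1 := by
  have hinj : Set.InjOn (fun k : ℕ => (k : ℝ)) (Finset.Icc h m) :=
    fun a _ b _ hab => Nat.cast_injective hab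
  have hne : (Finset.Icc h m).Nonempty := ⟨h, Finset.mem_Icc.2 ⟨le_refl _, hhm⟩⟩
  have key := congrArg (Polynomial.eval (0 : ℝ)) (Lagrange.sum_basis hinj hne)
  rw [Polynomial.eval_finset_sum, Polynomial.eval_one] at key
  rw [← key]
  refine Finset.sum_congr rfl fun i hi => ?_
  rw [Lagrange.basis, Polynomial.eval_prod]
  refine Finset.prod_congr rfl fun j hj => ?_
  have hji : j ≠ i := (Finset.mem_erase.1 hj).1
  have hji' : (j : ℝ) ≠ (i : ℝ) := by exact_mod_cast hji
  simp only [Lagrange.basisDivisor, Polynomial.eval_mul, Polynomial.eval_C,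
    Polynomial.eval_sub, Polynomial.eval_X]
  rw [div_eq_mul_inv]
  have hsub : ((i:ℝ) - j) = -((j:ℝ) - i) := by ring
  rw [hsub, inv_neg, zero_sub]
  ring

lemma slope_lim (a : ℝ) :
    Tendsto (fun Δ : ℝ => (1 - Real.exp (-a * Δ)) / Δ) (nhdsWithin 0 (Set.Ioi 0)) (nhds a) := by
  have hd : HasDerivAt (fun x : ℝ => 1 - Real.exp (-a * x)) a 0 := by
    have h1 : HasDerivAt (fun x : ℝ => -a * x) (-a) 0 := by
      simpa using (hasDerivAt_id (0:ℝ)).const_mul (-a)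
    have h3 := h1.exp.const_sub 1
    simpa using h3
  have := hasDerivAt_iff_tendsto_slope.1 hd
  have h4 : Tendsto (slope (fun x : ℝ => 1 - Real.exp (-a * x)) 0)
      (nhdsWithin 0 (Set.Ioi 0)) (nhds a) :=
    this.mono_left (nhdsWithin_mono _ (fun x hx => ne_of_gt hx))
  refine h4.congr fun x => ?_
  simp [slope_def_field, div_eq_mul_inv]

/-- `lim_{Δ→0⁺}` of the download cost `Mω(ρ_BS + (ρ_D2D hα/F − ρ_BS)·p_D2D(Δ))` equals
`Mω ρ_D2D hα/F`, and `lim_{Δ→∞}` equals `Mω ρ_BS`, for `μ > 0`. -/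
theorem download_cost_limits (M ω F α ρBS ρD2D μ : ℝ)
    (hM : 0 < M) (hω : 0 < ω) (hF : 0 < F) (hα : 0 < α)
    (hρBS : 0 < ρBS) (hρD2D : 0 < ρD2D) (hμ : 0 < μ)
    (h m : ℕ) (h1 : 1 ≤ h) (hhm : h ≤ m)
    (pD2D Cd : ℝ → ℝ)
    (hp : ∀ Δ, pD2D Δ = (1 / Δ) * ∑ i ∈ Finset.Icc h m,
        (1 - Real.exp (-((i : ℝ) * μ) * Δ)) / ((i : ℝ) * μ) *
          ∏ j ∈ (Finset.Icc h m).erase i, (j : ℝ) / ((j : ℝ) - (i : ℝ)))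
    (hCd : ∀ Δ, Cd Δ = M * ω * (ρBS + (ρD2D * (h * α) / F - ρBS) * pD2D Δ)) :
    Tendsto Cd (nhdsWithin 0 (Set.Ioi 0)) (nhds (M * ω * ρD2D * (h * α) / F)) ∧
    Tendsto Cd atTop (nhds (M * ω * ρBS)) := by
  set s := Finset.Icc h m with hs
  set c : ℕ → ℝ := fun i => ∏ j ∈ s.erase i, (j : ℝ) / ((j : ℝ) - (i : ℝ)) with hc
  have ha : ∀ i ∈ s, (0:ℝ) < (i:ℝ) * μ := by
    intro i hi
    have : 1 ≤ i := le_trans h1 (Finset.mem_Icc.1 hi).1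
    have : (0:ℝ) < (i:ℝ) := by exact_mod_cast this
    positivity
  have hpform : ∀ Δ, pD2D Δ = ∑ i ∈ s,
      (1 / Δ) * ((1 - Real.exp (-((i : ℝ) * μ) * Δ)) / ((i : ℝ) * μ) * c i) := by
    intro Δ; rw [hp Δ, Finset.mul_sum]
  -- limit at 0⁺ of pD2D is 1
  have hp0 : Tendsto pD2D (nhdsWithin 0 (Set.Ioi 0)) (nhds 1) := by
    have hterm : ∀ i ∈ s, Tendsto
        (fun Δ => (1 / Δ) * ((1 - Real.exp (-((i : ℝ) * μ) * Δ)) / ((i : ℝ) * μ) * c i))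
        (nhdsWithin 0 (Set.Ioi 0)) (nhds (c i)) := by
      intro i hi
      have hai := ha i hi
      have h5 := (slope_lim ((i:ℝ) * μ)).mul_const (c i / ((i:ℝ) * μ))
      have heq : ((i:ℝ) * μ) * (c i / ((i:ℝ) * μ)) = c i := by
        field_simp
        exact mul_div_cancel_left₀ _ (left_ne_zero_of_mul hai.ne')
      rw [heq] at h5
      refine h5.congr fun Δ => ?_
      ring
    have hsum := tendsto_finset_sum s hterm
    rw [show ∑ i ∈ s, c i = 1 from lagrange_key h m hhm] at hsum
    exact hsum.congr fun Δ => (hpform Δ).symm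
  -- limit atTop of pD2D is 0
  have hpT : Tendsto pD2D atTop (nhds 0) := by
    have hterm : ∀ i ∈ s, Tendsto
        (fun Δ => (1 / Δ) * ((1 - Real.exp (-((i : ℝ) * μ) * Δ)) / ((i : ℝ) * μ) * c i))
        atTop (nhds 0) := by
      intro i hi
      have hai := ha i hi
      have hexp : Tendsto (fun Δ : ℝ => Real.exp (-((i : ℝ) * μ) * Δ)) atTop (nhds 0) := by
        apply Real.tendsto_exp_atBot.comp
        exact (tendsto_id.const_mul_atTop_of_neg (neg_neg_iff_pos.2 hai)).congr fun x => rfl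
      have hinner : Tendsto
          (fun Δ => (1 - Real.exp (-((i : ℝ) * μ) * Δ)) / ((i : ℝ) * μ) * c i)
          atTop (nhds ((1 - 0) / ((i:ℝ) * μ) * c i)) :=
        (((tendsto_const_nhds.sub hexp).div_const _).mul_const _)
      have hzero : Tendsto (fun Δ : ℝ => 1 / Δ) atTop (nhds 0) := by
        simpa [one_div] using (tendsto_inv_atTop_zero : Tendsto (fun Δ : ℝ => Δ⁻¹) atTop (nhds 0))
      simpa using hzero.mul hinner
    have hsum := tendsto_finset_sum s hterm
    rw [Finset.sum_const_zero] at hsum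
    exact hsum.congr fun Δ => (hpform Δ).symm
  constructor
  · have := ((hp0.const_mul (ρD2D * (h * α) / F - ρBS)).const_add ρBS).const_mul (M * ω)
    have heq : M * ω * (ρBS + (ρD2D * (h * α) / F - ρBS) * 1) = M * ω * ρD2D * (h * α) / F := by
      ring
    rw [heq] at this
    exact this.congr fun Δ => (hCd Δ).symm
  · have := ((hpT.const_mul (ρD2D * (h * α) / F - ρBS)).const_add ρBS).const_mul (M * ω)
    have heq : M * ω * (ρBS + (ρD2D * (h * α) / F - ρBS) * 0) = M * ω * ρBS := by ring
    rw [heq] at this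
    exact this.congr fun Δ => (hCd Δ).symm
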